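/- For a closed set C ⊆ ℝ and t ∈ ℝ, define g_t(C) := sup{x ∈ C : x ≤ t} (with sup ∅ = −∞). Then for fixed t and C, the map g_t from the space of closed sets (with the Fell–Matheron topology) to ℝ̄ is continuous at C if and only if the function s ↦ g_s(C) is continuous at s = t. -/

import Mathlib

open Filter

/-- strict version: sup {x ∈ C : x < t} -/
noncomputable def gSetL (t : ℝ) (C : Set ℝ) : EReal :=
  sSup {x : EReal | ∃ r : ℝ, r ∈ C ∧ r < t ∧ x = (r : EReal)}

/-- `gSet t C = sup {x ∈ C : x ≤ t}`, with values in `ℝ̄ = ℝ ∪ {±∞}` and `sup ∅ = −∞`. -/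
noncomputable def gSet (t : ℝ) (C : Set ℝ) : EReal :=
  sSup {x : EReal | ∃ r : ℝ, r ∈ C ∧ r ≤ t ∧ x = (r : EReal)}

/-- Convergence `C_n → C` in the Fell–Matheron topology on closed subsets of `ℝ`:
every open set meeting `C` eventually meets `C_n`, and every compact set disjoint
from `C` is eventually disjoint from `C_n`. -/
def FMconv (Cn : ℕ → Set ℝ) (C : Set ℝ) : Prop :=
  (∀ G : Set ℝ, IsOpen G → (G ∩ C).Nonempty → ∀ᶠ n in atTop, (G ∩ Cn n).Nonempty) ∧
  (∀ K : Set ℝ, IsCompact K → K ∩ C = ∅ → ∀ᶠ n in atTop, K ∩ Cn n = ∅)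

section Lemmas
open Set Metric Topology

lemma coe_le_gSet {C : Set ℝ} {r t : ℝ} (h : r ∈ C) (h2 : r ≤ t) : (r : EReal) ≤ gSet t C :=
  le_sSup ⟨r, h, h2, rfl⟩

lemma gSet_le {C : Set ℝ} {t : ℝ} {b : EReal} (h : ∀ r : ℝ, r ∈ C → r ≤ t → (r : EReal) ≤ b) :
    gSet t C ≤ b := sSup_le (by rintro x ⟨r, hr, hrt, rfl⟩; exact h r hr hrt)

lemma gSet_mono (C : Set ℝ) : Monotone (fun s => gSet s C) := fun s s' hss' =>
  sSup_le_sSup (by rintro x ⟨r, hr, hrt, rfl⟩; exact ⟨r, hr, hrt.trans hss', rfl⟩)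

lemma gSetL_le_gSet (C : Set ℝ) (t : ℝ) : gSetL t C ≤ gSet t C :=
  sSup_le_sSup (by rintro x ⟨r, hr, hrt, rfl⟩; exact ⟨r, hr, hrt.le, rfl⟩)

lemma contAt_iff (C : Set ℝ) (hC : IsClosed C) (t : ℝ) :
    ContinuousAt (fun s => gSet s C) t ↔ gSetL t C = gSet t C := by
  constructor
  · intro h
    refine le_antisymm (gSetL_le_gSet C t) ?_
    have h1 : Tendsto (fun s => gSet s C) (𝓝[<] t) (𝓝 (gSet t C)) :=
      h.tendsto.mono_left nhdsWithin_le_nhds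
    refine le_of_tendsto h1 ?_
    filter_upwards [self_mem_nhdsWithin] with s hs
    exact gSet_le fun r hr hrt => le_sSup ⟨r, hr, lt_of_le_of_lt hrt hs, rfl⟩
  · intro hLG
    have hmono := gSet_mono C
    rw [ContinuousAt, tendsto_order]
    constructor
    · intro c hc
      rw [← hLG] at hc
      obtain ⟨x, ⟨r, hrC, hrt, rfl⟩, hcx⟩ := lt_sSup_iff.1 hc
      filter_upwards [Ioi_mem_nhds hrt] with s hs
      exact lt_of_lt_of_le hcx (coe_le_gSet hrC hs.le)
    · intro c hc
      by_cases hex : ∃ s₀, t < s₀ ∧ gSet s₀ C < c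
      · obtain ⟨s₀, hs₀t, hs₀⟩ := hex
        filter_upwards [Iio_mem_nhds hs₀t] with s hs
        exact lt_of_le_of_lt (hmono hs.le) hs₀
      · exfalso
        push_neg at hex
        obtain ⟨b, hGb, hbc⟩ := EReal.exists_between_coe_real hc
        have key : ∀ n : ℕ, ∃ r : ℝ, r ∈ C ∧ r ≤ t + 1/(n+1) ∧ b < r := by
          intro n
          have hpos : (0:ℝ) < 1/(n+1) := by positivity
          have h1 := hex (t + 1/(n+1)) (by linarith)
          have hb : (b : EReal) < gSet (t + 1/(n+1)) C := lt_of_lt_of_le hbc h1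
          obtain ⟨x, ⟨r, hrC, hrt, rfl⟩, hbx⟩ := lt_sSup_iff.1 hb
          exact ⟨r, hrC, hrt, EReal.coe_lt_coe_iff.1 hbx⟩
        choose r hrC hrle hbr using key
        have hmem : ∀ n, r n ∈ C ∩ Icc b (t+1) := by
          intro n
          have hn0 : (0:ℝ) ≤ (n:ℝ) := Nat.cast_nonneg n
          have hle : (1:ℝ)/(n+1) ≤ 1 := by
            rw [div_le_one (by positivity)]; linarith
          exact ⟨hrC n, (hbr n).le, (hrle n).trans (by linarith)⟩
        have hcpt : IsCompact (C ∩ Icc b (t+1)) := isCompact_Icc.inter_left hC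
        obtain ⟨a, ⟨haC, hab, _⟩, φ, hφ, hφt⟩ := hcpt.tendsto_subseq hmem
        have h2 : Tendsto (fun n => t + 1/((φ n : ℝ)+1)) atTop (𝓝 t) := by
          have := (tendsto_one_div_add_atTop_nhds_zero_nat : Tendsto (fun n : ℕ => 1 / ((n : ℝ) + 1)) atTop (𝓝 0)).comp hφ.tendsto_atTop
          simpa using tendsto_const_nhds.add this
        have hat : a ≤ t :=
          le_of_tendsto_of_tendsto' hφt h2 (fun n => hrle (φ n))
        have hfin : (b : EReal) ≤ gSet t C :=
          le_trans (EReal.coe_le_coe_iff.2 hab) (coe_le_gSet haC hat)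
        exact absurd hfin (not_le.2 hGb)

lemma eq_imp_fell (C : Set ℝ) (t : ℝ) (hLG : gSetL t C = gSet t C)
    (Cn : ℕ → Set ℝ) (hFM : FMconv Cn C) :
    Tendsto (fun n => gSet t (Cn n)) atTop (nhds (gSet t C)) := by
  rw [tendsto_order]
  constructor
  · intro c hc
    rw [← hLG] at hc
    obtain ⟨x, ⟨r, hrC, hrt, rfl⟩, hcx⟩ := lt_sSup_iff.1 hc
    obtain ⟨m, hcm, hmr⟩ := EReal.exists_between_coe_real hcx
    have hmr' : m < r := EReal.coe_lt_coe_iff.1 hmr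
    have hne : (Ioo m t ∩ C).Nonempty := ⟨r, ⟨hmr', hrt⟩, hrC⟩
    filter_upwards [hFM.1 (Ioo m t) isOpen_Ioo hne] with n hn
    obtain ⟨y, ⟨hmy, hyt⟩, hyCn⟩ := hn
    exact lt_of_lt_of_le (hcm.trans (EReal.coe_lt_coe_iff.2 hmy)) (coe_le_gSet hyCn hyt.le)
  · intro c hc
    obtain ⟨b, hGb, hbc⟩ := EReal.exists_between_coe_real hc
    have hK : Icc b t ∩ C = ∅ := by
      ext x
      simp only [mem_inter_iff, mem_Icc, mem_empty_iff_false, iff_false, not_and]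
      rintro ⟨hbx, hxt⟩ hxC
      have h1 : (b : EReal) ≤ gSet t C :=
        le_trans (EReal.coe_le_coe_iff.2 hbx) (coe_le_gSet hxC hxt)
      exact absurd h1 (not_le.2 hGb)
    filter_upwards [hFM.2 (Icc b t) isCompact_Icc hK] with n hn
    refine lt_of_le_of_lt (gSet_le fun y hyCn hyt => ?_) hbc
    by_contra hby
    push_neg at hby
    have hby' : b < y := EReal.coe_lt_coe_iff.1 hby
    exact (Set.eq_empty_iff_forall_notMem.1 hn) y ⟨⟨hby'.le, hyt⟩, hyCn⟩

lemma fell_imp_eq (C : Set ℝ) (hC : IsClosed C) (t : ℝ)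
    (hFell : ∀ Cn : ℕ → Set ℝ, (∀ n, IsClosed (Cn n)) → FMconv Cn C →
        Tendsto (fun n => gSet t (Cn n)) atTop (nhds (gSet t C))) :
    gSetL t C = gSet t C := by
  refine le_antisymm (gSetL_le_gSet C t) ?_
  set a : ℕ → ℝ := fun n => 1/(n+1) with ha_def
  have hapos : ∀ n, 0 < a n := fun n => by positivity
  have ha0 : Tendsto a atTop (𝓝 0) := tendsto_one_div_add_atTop_nhds_zero_nat
  set Cn : ℕ → Set ℝ := fun n => (fun x => x + a n) '' C with hCn_def
  have hclosed : ∀ n, IsClosed (Cn n) := by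
    intro n
    exact (Homeomorph.addRight (a n)).isClosedMap C hC
  have hFM : FMconv Cn C := by
    constructor
    · intro G hG ⟨x, hxG, hxC⟩
      have hx : Tendsto (fun n => x + a n) atTop (𝓝 x) := by
        simpa using tendsto_const_nhds.add ha0
      filter_upwards [hx.eventually (hG.mem_nhds hxG)] with n hn
      exact ⟨x + a n, hn, ⟨x, hxC, rfl⟩⟩
    · intro K hK hKC
      have hsub : K ⊆ Cᶜ := by
        intro x hx
        intro hxC
        exact (Set.eq_empty_iff_forall_notMem.1 hKC) x ⟨hx, hxC⟩
      obtain ⟨δ, hδ, hthick⟩ := hK.exists_thickening_subset_open hC.isOpen_compl hsub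
      have hev : ∀ᶠ n in atTop, a n < δ := by
        have := ha0.eventually (gt_mem_nhds hδ)
        simpa using this
      filter_upwards [hev] with n hn
      rw [Set.eq_empty_iff_forall_notMem]
      rintro y ⟨hyK, x, hxC, rfl⟩
      have hxth : x ∈ thickening δ K := by
        rw [mem_thickening_iff]
        refine ⟨x + a n, hyK, ?_⟩
        rw [Real.dist_eq]
        rw [abs_of_nonpos (by linarith [hapos n])]
        simpa using (hn)
      exact hthick hxth hxC
  have hT := hFell Cn hclosed hFM
  have hbound : ∀ n, gSet t (Cn n) ≤ gSetL t C + (a n : EReal) := by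
    intro n
    refine gSet_le fun y hy hyt => ?_
    obtain ⟨x, hxC, rfl⟩ := hy
    have hyt' : x + a n ≤ t := hyt
    have hxt : x < t := by linarith [hapos n]
    have hx : (x : EReal) ≤ gSetL t C := le_sSup ⟨x, hxC, hxt, rfl⟩
    calc ((x + a n : ℝ) : EReal) = (x : EReal) + (a n : EReal) := EReal.coe_add x (a n)
      _ ≤ gSetL t C + (a n : EReal) := add_le_add_left hx _
  revert hbound
  generalize gSetL t C = L
  induction L using EReal.rec with
  | bot =>
    intro hbound
    refine le_of_tendsto_of_tendsto' hT tendsto_const_nhds (fun n => ?_)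
    simpa [EReal.bot_add] using hbound n
  | coe l =>
    intro hbound
    have hg : Tendsto (fun n => ((l + a n : ℝ) : EReal)) atTop (𝓝 ((l : ℝ) : EReal)) := by
      rw [EReal.tendsto_coe]
      simpa using tendsto_const_nhds.add ha0
    refine le_of_tendsto_of_tendsto' hT hg (fun n => ?_)
    rw [EReal.coe_add]
    exact hbound n
  | top =>
    intro _
    exact le_top

end Lemmas

/-- For a closed `C ⊆ ℝ` and `t ∈ ℝ`, the map `g_t` on closed sets (with the Fell–Matheron
topology, expressed via sequential convergence) is continuous at `C` if and only if the
function `s ↦ g_s(C)` is continuous at `s = t`. -/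
theorem gt_continuousAt_iff (C : Set ℝ) (hC : IsClosed C) (t : ℝ) :
    (∀ Cn : ℕ → Set ℝ, (∀ n, IsClosed (Cn n)) → FMconv Cn C →
        Tendsto (fun n => gSet t (Cn n)) atTop (nhds (gSet t C)))
      ↔ ContinuousAt (fun s => gSet s C) t := by
  rw [contAt_iff C hC t]
  constructor
  · exact fell_imp_eq C hC t
  · intro hLG Cn _ hFM
    exact eq_imp_fell C t hLG Cn hFM
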